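/- Let G be a group generated by a finite symmetric set and H ≤ G a subgroup. Then: (1) for every finitely supported f : G → ℂ one has ‖λ_{G/H}(f)‖ ≤ ‖f‖_h; (2) for every finitely supported f : G → ℝ with nonnegative values one has ‖f‖_* ≤ ‖λ_{G/H}(f)‖ and moreover ‖λ_{G/H}(f)‖ = ‖f‖_h. -/

import Mathlib

open scoped BigOperators

attribute [local instance] Classical.propDecidable

section Defs

variable {G : Type*} [Group G]

/-- Word length with respect to a generating set `S`. -/
noncomputable def wordLength (S : Set G) (x : G) : ℕ :=
  sInf {n | ∃ l : List G, (∀ s ∈ l, s ∈ S) ∧ l.length = n ∧ l.prod = x}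

/-- Convolution of finitely supported functions:
`(f * ϕ) x = ∑ z, f z * ϕ (z⁻¹ * x)`. -/
noncomputable def conv {k : Type*} [Semiring k] (f ϕ : G →₀ k) : G →₀ k :=
  f.sum fun z c => c • Finsupp.mapDomain (fun x => z * x) ϕ

/-- `n`-fold convolution power. -/
noncomputable def convPow {k : Type*} [Semiring k] (f : G →₀ k) : ℕ → G →₀ k
  | 0 => Finsupp.single 1 1
  | n + 1 => conv f (convPow f n)

/-- ℓ² norm of a finitely supported function. -/
noncomputable def l2Norm {α k : Type*} [NormedAddCommGroup k] (f : α →₀ k) : ℝ :=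
  Real.sqrt (∑ x ∈ f.support, ‖f x‖ ^ 2)

/-- ℓ¹ norm of a finitely supported function. -/
noncomputable def l1Norm {α k : Type*} [NormedAddCommGroup k] (f : α →₀ k) : ℝ :=
  ∑ x ∈ f.support, ‖f x‖

/-- The hybrid `(2,1)` norm with respect to the subgroup `H`:
`‖f‖_{(2,1)} = sqrt (∑_{gH ∈ G/H} (∑_{x ∈ gH} |f x|)²)`. -/
noncomputable def l21Norm (H : Subgroup G) {k : Type*} [NormedAddCommGroup k]
    (f : G →₀ k) : ℝ :=
  l2Norm (Finsupp.mapDomain (QuotientGroup.mk : G → G ⧸ H) (f.mapRange norm norm_zero))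

/-- Hybrid operator norm `‖f‖_h`. -/
noncomputable def hybridOpNorm (H : Subgroup G) (f : G →₀ ℂ) : ℝ :=
  sSup {c : ℝ | ∃ ϕ : G →₀ ℂ, l21Norm H ϕ ≤ 1 ∧ c = l21Norm H (conv f ϕ)}

/-- Regular operator norm `‖f‖_*`. -/
noncomputable def regOpNorm (f : G →₀ ℂ) : ℝ :=
  sSup {c : ℝ | ∃ ξ : G →₀ ℂ, l2Norm ξ ≤ 1 ∧ c = l2Norm (conv f ξ)}

/-- The quasi-regular representation:
`(λ_{G/H}(f) ξ)(gH) = ∑ z, f z * ξ (z⁻¹ g H)`. -/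
noncomputable def quasiReg (H : Subgroup G) (f : G →₀ ℂ) (ξ : (G ⧸ H) →₀ ℂ) :
    (G ⧸ H) →₀ ℂ :=
  f.sum fun z c => c • Finsupp.mapDomain (fun q => z • q) ξ

/-- Quasi-regular operator norm `‖λ_{G/H}(f)‖`. -/
noncomputable def quasiRegOpNorm (H : Subgroup G) (f : G →₀ ℂ) : ℝ :=
  sSup {c : ℝ | ∃ ξ : (G ⧸ H) →₀ ℂ, l2Norm ξ ≤ 1 ∧ c = l2Norm (quasiReg H f ξ)}

/-- Embed a real finitely supported function into the complex valued ones. -/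
noncomputable def toC {α : Type*} (f : α →₀ ℝ) : α →₀ ℂ :=
  f.mapRange Complex.ofReal Complex.ofReal_zero

/-- Pointwise weight of a function by `(1 + ℓ)^s`. -/
noncomputable def weight (S : Set G) (s : ℝ) (f : G →₀ ℂ) : G →₀ ℂ where
  support := f.support
  toFun x := ((((1 : ℝ) + (wordLength S x : ℝ)) ^ s : ℝ) : ℂ) * f x
  mem_support_toFun x := by
    simp only [Finsupp.mem_support_iff]
    have hpos : (0 : ℝ) < ((1 : ℝ) + (wordLength S x : ℝ)) ^ s :=
      Real.rpow_pos_of_pos (by positivity) s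
    constructor
    · intro hf h
      rcases mul_eq_zero.mp h with h1 | h2
      · exact hpos.ne' (by exact_mod_cast h1)
      · exact hf h2
    · intro h hf
      exact h (by rw [hf, mul_zero])

/-- The involution `f⋆ x = f x⁻¹`. -/
noncomputable def starFun {k : Type*} [Zero k] (f : G →₀ k) : G →₀ k :=
  Finsupp.equivMapDomain (Equiv.inv G) f

/-- Sum of the values of `g` over the subgroup `H`. -/
noncomputable def sumOverSubgroup (H : Subgroup G) (g : G →₀ ℝ) : ℝ :=
  ∑ x ∈ g.support.filter (fun x => x ∈ H), g x

/-- `f` is supported in the ball of radius `R` for the word length of `S`. -/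
def supportedInBall (S : Set G) (R : ℕ) {k : Type*} [Zero k] (f : G →₀ k) : Prop :=
  ∀ x ∈ f.support, wordLength S x ≤ R

/-- Rapid decay property for the pair `(G, H)`. -/
def PairRD (S : Set G) (H : Subgroup G) : Prop :=
  ∃ C : ℝ, ∃ D : ℕ, 0 ≤ C ∧ ∀ (R : ℕ) (f ϕ : G →₀ ℂ), supportedInBall S R f →
    l21Norm H (conv f ϕ) ≤ C * ((R : ℝ) + 1) ^ D * l21Norm H f * l21Norm H ϕ

/-- Rapid decay property for the group `G`. -/
def GroupRD (S : Set G) : Prop :=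
  ∃ C : ℝ, ∃ D : ℕ, 0 ≤ C ∧ ∀ (R : ℕ) (f ϕ : G →₀ ℂ), supportedInBall S R f →
    l2Norm (conv f ϕ) ≤ C * ((R : ℝ) + 1) ^ D * l2Norm f * l2Norm ϕ

/-- Polynomial growth of a subgroup for the induced length. -/
def polyGrowthSubgroup (S : Set G) (H : Subgroup G) : Prop :=
  ∃ C : ℝ, ∃ D : ℕ, 0 ≤ C ∧ ∀ R : ℕ,
    (Set.ncard {x : G | x ∈ H ∧ wordLength S x ≤ R} : ℝ) ≤ C * ((R : ℝ) + 1) ^ D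

/-- Polynomial growth of the coset space `G/H`. -/
def polyGrowthQuotient (S : Set G) (H : Subgroup G) : Prop :=
  ∃ C : ℝ, ∃ D : ℕ, 0 ≤ C ∧ ∀ R : ℕ,
    (Set.ncard ((QuotientGroup.mk : G → G ⧸ H) '' {x : G | wordLength S x ≤ R}) : ℝ) ≤
      C * ((R : ℝ) + 1) ^ D

/-- Co-amenability of `H` in `G`: Følner condition for the left action on `G/H`. -/
def Coamenable (H : Subgroup G) : Prop :=
  ∀ ε : ℝ, 0 < ε → ∀ F : Finset G, ∃ V : Finset (G ⧸ H), V.Nonempty ∧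
    ((symmDiff (Finset.image₂ (· • ·) F V) V).card : ℝ) ≤ ε * (V.card : ℝ)

/-- Matrix coefficient `⟨λ_{G/H}(γ) ξ, η⟩` of the quasi-regular representation
on `ℓ²(G/H)`. -/
noncomputable def qrCoeff (H : Subgroup G) (γ : G)
    (ξ η : lp (fun _ : G ⧸ H => ℂ) 2) : ℂ :=
  ∑' q : G ⧸ H, ξ (γ⁻¹ • q) * (starRingEnd ℂ) (η q)

/-- The spectral radius of the random walk induced on `G/H`:
`ρ = limsup P_{2n}(H,H)^{1/(2n)}`. -/
noncomputable def specRadQuot (H : Subgroup G) (μ : G →₀ ℝ) : ℝ :=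
  Filter.limsup (fun n : ℕ =>
    (sumOverSubgroup H (convPow μ (2 * n))) ^ ((1 : ℝ) / (2 * (n : ℝ)))) Filter.atTop

end Defs

section Helpers
open Finsupp
variable {α β k : Type*} [NormedAddCommGroup k]

theorem l2Norm_nonneg (f : α →₀ k) : 0 ≤ l2Norm f := Real.sqrt_nonneg _

theorem l2Norm_eq_sqrt_sum (f : α →₀ k) (s : Finset α) (h : f.support ⊆ s) :
    l2Norm f = Real.sqrt (∑ x ∈ s, ‖f x‖ ^ 2) := by
  unfold l2Norm
  congr 1
  exact Finset.sum_subset h (by intro x _ hx; simp [Finsupp.notMem_support_iff.mp hx])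

theorem l2Norm_mono {k' : Type*} [NormedAddCommGroup k'] (f : α →₀ k) (g : α →₀ k')
    (h : ∀ x, ‖f x‖ ≤ ‖g x‖) : l2Norm f ≤ l2Norm g := by
  rw [l2Norm_eq_sqrt_sum f (f.support ∪ g.support) Finset.subset_union_left,
    l2Norm_eq_sqrt_sum g (f.support ∪ g.support) Finset.subset_union_right]
  apply Real.sqrt_le_sqrt
  apply Finset.sum_le_sum
  intro x _
  have := h x
  have h0 : (0:ℝ) ≤ ‖f x‖ := norm_nonneg _
  nlinarith [norm_nonneg (g x)]

theorem l2Norm_zero : l2Norm (0 : α →₀ k) = 0 := by simp [l2Norm]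

theorem l2Norm_congr_norm {k' : Type*} [NormedAddCommGroup k'] (f : α →₀ k) (g : α →₀ k')
    (h : ∀ x, ‖f x‖ = ‖g x‖) : l2Norm f = l2Norm g :=
  le_antisymm (l2Norm_mono f g fun x => (h x).le) (l2Norm_mono g f fun x => (h x).ge)

end Helpers
section Helpers2
open Finsupp
variable {α β k : Type*} {G : Type*} [Group G]

theorem mapDomainApplyFilter {k : Type*} [AddCommMonoid k] (h : α → β) (v : α →₀ k) (b : β) :
    Finsupp.mapDomain h v b = ∑ a ∈ v.support, if h a = b then v a else 0 := by
  classical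
  rw [Finsupp.mapDomain, Finsupp.sum_apply, Finsupp.sum]
  apply Finset.sum_congr rfl
  intro a _
  rw [Finsupp.single_apply]

theorem conv_apply (f ϕ : G →₀ ℂ) (x : G) :
    conv f ϕ x = ∑ z ∈ f.support, f z * ϕ (z⁻¹ * x) := by
  classical
  rw [conv, Finsupp.sum_apply, Finsupp.sum]
  apply Finset.sum_congr rfl
  intro z _
  rw [Finsupp.smul_apply, smul_eq_mul]
  congr 1
  have : (fun y => z * y) = ⇑(Equiv.mulLeft z) := rfl
  rw [this, Finsupp.mapDomain_equiv_apply]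
  simp

theorem quasiReg_apply (H : Subgroup G) (f : G →₀ ℂ) (ξ : (G ⧸ H) →₀ ℂ) (q : G ⧸ H) :
    quasiReg H f ξ q = ∑ z ∈ f.support, f z * ξ (z⁻¹ • q) := by
  classical
  rw [quasiReg, Finsupp.sum_apply, Finsupp.sum]
  apply Finset.sum_congr rfl
  intro z _
  rw [Finsupp.smul_apply, smul_eq_mul]
  congr 1
  have : (fun p : G ⧸ H => z • p) = ⇑(MulAction.toPerm z) := rfl
  rw [this, Finsupp.mapDomain_equiv_apply]
  simp [MulAction.toPerm]

end Helpers2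
section Helpers3
open Finsupp
variable {α β k : Type*} [RCLike k]

theorem euclid_minkowski (T : Finset α) (s : Finset β) (v : β → α → k) :
    Real.sqrt (∑ x ∈ T, ‖∑ i ∈ s, v i x‖ ^ 2) ≤
      ∑ i ∈ s, Real.sqrt (∑ x ∈ T, ‖v i x‖ ^ 2) := by
  classical
  let w : β → EuclideanSpace k T := fun i => WithLp.toLp 2 (fun x : T => v i x)
  have hn : ∀ i, ‖w i‖ = Real.sqrt (∑ x ∈ T, ‖v i x‖ ^ 2) := by
    intro i
    rw [EuclideanSpace.norm_eq]
    congr 1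
    rw [← Finset.sum_coe_sort T (fun x => ‖v i x‖ ^ 2)]
  have hsum : ‖∑ i ∈ s, w i‖ = Real.sqrt (∑ x ∈ T, ‖∑ i ∈ s, v i x‖ ^ 2) := by
    rw [EuclideanSpace.norm_eq]
    rw [← Finset.sum_coe_sort T (fun x => ‖∑ i ∈ s, v i x‖ ^ 2)]
    congr 1
    apply Finset.sum_congr rfl
    intro x _
    have hx : (∑ i ∈ s, w i) x = ∑ i ∈ s, w i x := by simp [WithLp.ofLp_sum]
    rw [hx]
  calc Real.sqrt (∑ x ∈ T, ‖∑ i ∈ s, v i x‖ ^ 2) = ‖∑ i ∈ s, w i‖ := hsum.symm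
    _ ≤ ∑ i ∈ s, ‖w i‖ := norm_sum_le s w
    _ = ∑ i ∈ s, Real.sqrt (∑ x ∈ T, ‖v i x‖ ^ 2) := Finset.sum_congr rfl fun i _ => hn i

theorem l2Norm_finset_sum_le (s : Finset β) (F : β → α →₀ k) :
    l2Norm (∑ i ∈ s, F i) ≤ ∑ i ∈ s, l2Norm (F i) := by
  classical
  set T : Finset α := s.biUnion (fun i => (F i).support) with hT
  have hsupp : (∑ i ∈ s, F i).support ⊆ T := Finsupp.support_finset_sum
  rw [l2Norm_eq_sqrt_sum _ T hsupp]
  have h1 : ∀ i ∈ s, l2Norm (F i) = Real.sqrt (∑ x ∈ T, ‖F i x‖ ^ 2) := by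
    intro i hi
    exact l2Norm_eq_sqrt_sum _ T (Finset.subset_biUnion_of_mem (fun i => (F i).support) hi)
  rw [Finset.sum_congr rfl h1]
  have := euclid_minkowski T s (fun i x => F i x)
  simpa [Finsupp.finset_sum_apply] using this

theorem l2Norm_smul (c : k) (f : α →₀ k) : l2Norm (c • f) = ‖c‖ * l2Norm f := by
  classical
  rw [l2Norm_eq_sqrt_sum (c • f) f.support Finsupp.support_smul, l2Norm]
  rw [← Real.sqrt_sq (norm_nonneg c), ← Real.sqrt_mul (by positivity), Finset.mul_sum]
  congr 1
  apply Finset.sum_congr rfl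
  intro x _
  rw [Finsupp.smul_apply, smul_eq_mul, norm_mul]
  ring

theorem l2Norm_mapDomain_inj {k : Type*} [NormedAddCommGroup k] {u : α → β}
    (hu : Function.Injective u) (f : α →₀ k) :
    l2Norm (Finsupp.mapDomain u f) = l2Norm f := by
  classical
  unfold l2Norm
  rw [Finsupp.mapDomain_support_of_injective hu f]
  congr 1
  rw [Finset.sum_image (fun a _ b _ h => hu h)]
  apply Finset.sum_congr rfl
  intro a _
  rw [Finsupp.mapDomain_apply hu]

end Helpers3
section Helpers4
open Finsupp
variable {G : Type*} [Group G] (H : Subgroup G)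

theorem mk_smul' (z x : G) :
    (QuotientGroup.mk (z * x) : G ⧸ H) = z • (QuotientGroup.mk x : G ⧸ H) := rfl

theorem mdr_apply (F : ℂ → ℝ) (hF0 : F 0 = 0) (ϕ : G →₀ ℂ) (T : Finset G)
    (hT : ϕ.support ⊆ T) (q : G ⧸ H) :
    Finsupp.mapDomain (QuotientGroup.mk : G → G ⧸ H) (ϕ.mapRange F hF0) q =
      ∑ x ∈ T, if (QuotientGroup.mk x : G ⧸ H) = q then F (ϕ x) else 0 := by
  classical
  rw [mapDomainApplyFilter]
  simp only [Finsupp.mapRange_apply]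
  convert Finset.sum_subset (f := fun x => if (QuotientGroup.mk x : G ⧸ H) = q then F (ϕ x) else 0)
    (Finsupp.support_mapRange.trans hT : (ϕ.mapRange F hF0).support ⊆ T) ?_
  intro x _ hx
  have h0 : F (ϕ x) = 0 := by
    have := Finsupp.notMem_support_iff.mp hx
    rwa [Finsupp.mapRange_apply] at this
  rw [h0, ite_self]

theorem psi_nonneg (ϕ : G →₀ ℂ) (q : G ⧸ H) :
    0 ≤ Finsupp.mapDomain (QuotientGroup.mk : G → G ⧸ H) (ϕ.mapRange norm norm_zero) q := by
  rw [mdr_apply H norm norm_zero ϕ ϕ.support subset_rfl]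
  apply Finset.sum_nonneg
  intro x _
  split
  · exact norm_nonneg _
  · exact le_rfl

theorem fiber_sum_le (F : ℂ → ℝ) (hF0 : F 0 = 0) (hFnn : ∀ c, 0 ≤ F c)
    (ϕ : G →₀ ℂ) (T : Finset G) (z : G) (q : G ⧸ H) :
    (∑ x ∈ T, if (QuotientGroup.mk x : G ⧸ H) = q then F (ϕ (z⁻¹ * x)) else 0) ≤
      Finsupp.mapDomain (QuotientGroup.mk : G → G ⧸ H) (ϕ.mapRange F hF0) (z⁻¹ • q) := by
  classical
  set T' : Finset G := ϕ.support ∪ T.image (fun x => z⁻¹ * x) with hT'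
  rw [mdr_apply H F hF0 ϕ T' Finset.subset_union_left]
  have hinj : Function.Injective (fun x : G => z⁻¹ * x) := fun a b h => by
    simpa using h
  have hre : (∑ x ∈ T, if (QuotientGroup.mk x : G ⧸ H) = q then F (ϕ (z⁻¹ * x)) else 0)
      = ∑ y ∈ T.image (fun x => z⁻¹ * x),
        if (QuotientGroup.mk y : G ⧸ H) = z⁻¹ • q then F (ϕ y) else 0 := by
    rw [Finset.sum_image (fun a _ b _ h => hinj h)]
    apply Finset.sum_congr rfl
    intro x _
    have hiff : ((QuotientGroup.mk x : G ⧸ H) = q) ↔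
        ((QuotientGroup.mk (z⁻¹ * x) : G ⧸ H) = z⁻¹ • q) := by
      rw [mk_smul' H, smul_left_cancel_iff]
    by_cases hc : (QuotientGroup.mk x : G ⧸ H) = q
    · rw [if_pos hc, if_pos (hiff.mp hc)]
    · rw [if_neg hc, if_neg (fun h => hc (hiff.mpr h))]
  rw [hre]
  apply Finset.sum_le_sum_of_subset_of_nonneg Finset.subset_union_right
  intro y _ _
  split
  · exact hFnn _
  · exact le_rfl

end Helpers4
section Helpers5
open Finsupp
variable {G : Type*} [Group G] (H : Subgroup G)

/-- abbreviation for the coset-ℓ¹ pushforward -/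
noncomputable def Psi (H : Subgroup G) (ϕ : G →₀ ℂ) : (G ⧸ H) →₀ ℝ :=
  Finsupp.mapDomain (QuotientGroup.mk : G → G ⧸ H) (ϕ.mapRange norm norm_zero)

theorem psi_nonneg' (ϕ : G →₀ ℂ) (q : G ⧸ H) : 0 ≤ Psi H ϕ q := psi_nonneg H ϕ q

theorem l21Norm_eq (ϕ : G →₀ ℂ) : l21Norm H ϕ = l2Norm (Psi H ϕ) := rfl

theorem quasiReg_eq_sum (f : G →₀ ℂ) (ξ : (G ⧸ H) →₀ ℂ) :
    quasiReg H f ξ = ∑ z ∈ f.support, f z • Finsupp.mapDomain (fun q => z • q) ξ := rfl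

theorem conv_eq_sum (f ϕ : G →₀ ℂ) :
    conv f ϕ = ∑ z ∈ f.support, f z • Finsupp.mapDomain (fun x => z * x) ϕ := rfl

theorem mapDomain_smul_apply {k : Type*} [AddCommMonoid k] (z : G) (v : (G ⧸ H) →₀ k)
    (q : G ⧸ H) : Finsupp.mapDomain (fun p => z • p) v q = v (z⁻¹ • q) := by
  have : (fun p : G ⧸ H => z • p) = ⇑(MulAction.toPerm z) := rfl
  rw [this, Finsupp.mapDomain_equiv_apply]
  simp [MulAction.toPerm]

theorem young_quasi (f : G →₀ ℂ) (ξ : (G ⧸ H) →₀ ℂ) :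
    l2Norm (quasiReg H f ξ) ≤ l1Norm f * l2Norm ξ := by
  rw [quasiReg_eq_sum, l1Norm, Finset.sum_mul]
  calc l2Norm (∑ z ∈ f.support, f z • Finsupp.mapDomain (fun q => z • q) ξ)
      ≤ ∑ z ∈ f.support, l2Norm (f z • Finsupp.mapDomain (fun q => z • q) ξ) :=
        l2Norm_finset_sum_le _ _
    _ = ∑ z ∈ f.support, ‖f z‖ * l2Norm ξ := by
        apply Finset.sum_congr rfl
        intro z _
        rw [l2Norm_smul, l2Norm_mapDomain_inj (MulAction.injective z)]

theorem conv_psi_pointwise (f ϕ : G →₀ ℂ) (q : G ⧸ H) :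
    Psi H (conv f ϕ) q ≤ ∑ z ∈ f.support, ‖f z‖ * Psi H ϕ (z⁻¹ • q) := by
  classical
  rw [Psi, mdr_apply H norm norm_zero _ (conv f ϕ).support subset_rfl]
  calc (∑ x ∈ (conv f ϕ).support,
        if (QuotientGroup.mk x : G ⧸ H) = q then ‖conv f ϕ x‖ else 0)
      ≤ ∑ x ∈ (conv f ϕ).support, ∑ z ∈ f.support,
          (if (QuotientGroup.mk x : G ⧸ H) = q then ‖f z‖ * ‖ϕ (z⁻¹ * x)‖ else 0) := by
        apply Finset.sum_le_sum
        intro x _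
        split
        · rw [conv_apply]
          calc ‖∑ z ∈ f.support, f z * ϕ (z⁻¹ * x)‖
              ≤ ∑ z ∈ f.support, ‖f z * ϕ (z⁻¹ * x)‖ := norm_sum_le _ _
            _ = ∑ z ∈ f.support, ‖f z‖ * ‖ϕ (z⁻¹ * x)‖ := by
                apply Finset.sum_congr rfl; intro z _; rw [norm_mul]
        · simp
    _ = ∑ z ∈ f.support, ‖f z‖ * ∑ x ∈ (conv f ϕ).support,
          (if (QuotientGroup.mk x : G ⧸ H) = q then ‖ϕ (z⁻¹ * x)‖ else 0) := by
        rw [Finset.sum_comm]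
        apply Finset.sum_congr rfl
        intro z _
        rw [Finset.mul_sum]
        apply Finset.sum_congr rfl
        intro x _
        rw [mul_ite, mul_zero]
    _ ≤ ∑ z ∈ f.support, ‖f z‖ * Psi H ϕ (z⁻¹ • q) := by
        apply Finset.sum_le_sum
        intro z _
        apply mul_le_mul_of_nonneg_left _ (norm_nonneg _)
        exact fiber_sum_le H norm norm_zero (fun c => norm_nonneg c) ϕ _ z q

theorem young_l21 (f ϕ : G →₀ ℂ) :
    l21Norm H (conv f ϕ) ≤ l1Norm f * l21Norm H ϕ := by
  classical
  set A : (G ⧸ H) →₀ ℝ :=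
    ∑ z ∈ f.support, ‖f z‖ • Finsupp.mapDomain (fun p => z • p) (Psi H ϕ) with hA
  have hAapp : ∀ q, A q = ∑ z ∈ f.support, ‖f z‖ * Psi H ϕ (z⁻¹ • q) := by
    intro q
    rw [hA, Finsupp.finset_sum_apply]
    apply Finset.sum_congr rfl
    intro z _
    rw [Finsupp.smul_apply, mapDomain_smul_apply, smul_eq_mul]
  have hmono : l21Norm H (conv f ϕ) ≤ l2Norm A := by
    rw [l21Norm_eq]
    apply l2Norm_mono
    intro q
    rw [Real.norm_of_nonneg (psi_nonneg' H _ q)]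
    calc Psi H (conv f ϕ) q ≤ ∑ z ∈ f.support, ‖f z‖ * Psi H ϕ (z⁻¹ • q) :=
          conv_psi_pointwise H f ϕ q
      _ = A q := (hAapp q).symm
      _ ≤ ‖A q‖ := le_abs_self _
  refine hmono.trans ?_
  rw [l1Norm, Finset.sum_mul, hA]
  calc l2Norm (∑ z ∈ f.support, ‖f z‖ • Finsupp.mapDomain (fun p => z • p) (Psi H ϕ))
      ≤ ∑ z ∈ f.support, l2Norm (‖f z‖ • Finsupp.mapDomain (fun p => z • p) (Psi H ϕ)) :=
        l2Norm_finset_sum_le _ _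
    _ = ∑ z ∈ f.support, ‖f z‖ * l21Norm H ϕ := by
        apply Finset.sum_congr rfl
        intro z _
        rw [l2Norm_smul, l2Norm_mapDomain_inj (MulAction.injective z), norm_norm, l21Norm_eq]

end Helpers5
section Helpers6
open Finsupp
variable {G : Type*} [Group G] (H : Subgroup G)

theorem conv_zero (f : G →₀ ℂ) : conv f 0 = 0 := by
  simp [conv, Finsupp.sum, Finsupp.mapDomain_zero]

theorem quasiReg_zero (f : G →₀ ℂ) : quasiReg H f 0 = 0 := by
  simp [quasiReg, Finsupp.sum, Finsupp.mapDomain_zero]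

theorem l21Norm_zero : l21Norm H (0 : G →₀ ℂ) = 0 := by
  rw [l21Norm, Finsupp.mapRange_zero, Finsupp.mapDomain_zero, l2Norm_zero]

theorem mapDomain_mk_conv (f ϕ : G →₀ ℂ) :
    Finsupp.mapDomain (QuotientGroup.mk : G → G ⧸ H) (conv f ϕ) =
      quasiReg H f (Finsupp.mapDomain (QuotientGroup.mk : G → G ⧸ H) ϕ) := by
  rw [conv_eq_sum, quasiReg_eq_sum]
  have hms := map_sum (Finsupp.mapDomain.addMonoidHom (QuotientGroup.mk : G → G ⧸ H))
    (fun z => f z • Finsupp.mapDomain (fun x => z * x) ϕ) f.support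
  simp only [Finsupp.mapDomain.addMonoidHom_apply] at hms
  rw [hms]
  apply Finset.sum_congr rfl
  intro z _
  rw [Finsupp.mapDomain_smul]
  congr 1
  rw [← Finsupp.mapDomain_comp, ← Finsupp.mapDomain_comp]
  rfl

theorem mapRange_mapDomain_inj {α β k k' : Type*} [NormedAddCommGroup k]
    [NormedAddCommGroup k'] {u : α → β} (hu : Function.Injective u)
    (F : k → k') (hF0 : F 0 = 0) (v : α →₀ k) :
    Finsupp.mapRange F hF0 (Finsupp.mapDomain u v) =
      Finsupp.mapDomain u (Finsupp.mapRange F hF0 v) := by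
  classical
  ext b
  by_cases hb : b ∈ Set.range u
  · rcases hb with ⟨a, rfl⟩
    rw [Finsupp.mapRange_apply, Finsupp.mapDomain_apply hu, Finsupp.mapDomain_apply hu,
      Finsupp.mapRange_apply]
  · rw [Finsupp.mapRange_apply, Finsupp.mapDomain_notin_range _ _ hb,
      Finsupp.mapDomain_notin_range _ _ hb, hF0]

theorem l21Norm_lift (ξ : (G ⧸ H) →₀ ℂ) :
    l21Norm H (Finsupp.mapDomain (Quotient.out : G ⧸ H → G) ξ) = l2Norm ξ := by
  rw [l21Norm, mapRange_mapDomain_inj Quotient.out_injective, ← Finsupp.mapDomain_comp]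
  have hco : (QuotientGroup.mk : G → G ⧸ H) ∘ (Quotient.out : G ⧸ H → G) = id := by
    funext q
    exact QuotientGroup.out_eq' q
  rw [hco, Finsupp.mapDomain_id]
  exact l2Norm_congr_norm _ _ (fun q => by rw [Finsupp.mapRange_apply, norm_norm])

theorem mapDomain_mk_lift (ξ : (G ⧸ H) →₀ ℂ) :
    Finsupp.mapDomain (QuotientGroup.mk : G → G ⧸ H)
      (Finsupp.mapDomain (Quotient.out : G ⧸ H → G) ξ) = ξ := by
  rw [← Finsupp.mapDomain_comp]
  have hco : (QuotientGroup.mk : G → G ⧸ H) ∘ (Quotient.out : G ⧸ H → G) = id := by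
    funext q
    exact QuotientGroup.out_eq' q
  rw [hco, Finsupp.mapDomain_id]

theorem l2Norm_mapDomain_mk_le (ψ : G →₀ ℂ) :
    l2Norm (Finsupp.mapDomain (QuotientGroup.mk : G → G ⧸ H) ψ) ≤ l21Norm H ψ := by
  rw [l21Norm_eq]
  apply l2Norm_mono
  intro q
  rw [Real.norm_of_nonneg (psi_nonneg' H _ q), mapDomainApplyFilter,
    Psi, mdr_apply H norm norm_zero ψ ψ.support subset_rfl]
  refine (norm_sum_le _ _).trans (le_of_eq ?_)
  apply Finset.sum_congr rfl
  intro a _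
  split <;> simp

end Helpers6
section Helpers7
open Finsupp
variable {G : Type*} [Group G] (H : Subgroup G)

theorem mdr_nonneg (F : ℂ → ℝ) (hF0 : F 0 = 0) (hFnn : ∀ c, 0 ≤ F c) (ϕ : G →₀ ℂ)
    (q : G ⧸ H) :
    0 ≤ Finsupp.mapDomain (QuotientGroup.mk : G → G ⧸ H) (ϕ.mapRange F hF0) q := by
  rw [mdr_apply H F hF0 ϕ ϕ.support subset_rfl]
  apply Finset.sum_nonneg
  intro x _
  split
  · exact hFnn _
  · exact le_rfl

theorem toC_apply {α : Type*} (f : α →₀ ℝ) (x : α) : toC f x = (f x : ℂ) := rfl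

theorem toC_support {α : Type*} (f : α →₀ ℝ) : (toC f).support = f.support := by
  ext x
  simp [toC, Finsupp.mem_support_iff, Finsupp.mapRange_apply]

theorem l2Norm_toC {α : Type*} (f : α →₀ ℝ) : l2Norm (toC f) = l2Norm f :=
  l2Norm_congr_norm _ _ (fun x => by rw [toC_apply, Complex.norm_real])

theorem quasiReg_toC_apply (f : G →₀ ℝ) (ψ : (G ⧸ H) →₀ ℝ) (q : G ⧸ H) :
    quasiReg H (toC f) (toC ψ) q = ((∑ z ∈ f.support, f z * ψ (z⁻¹ • q) : ℝ) : ℂ) := by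
  rw [quasiReg_apply, toC_support]
  push_cast
  apply Finset.sum_congr rfl
  intro z _
  rw [toC_apply, toC_apply]

theorem quasiReg_toC_norm (f : G →₀ ℝ) (hf : ∀ x, 0 ≤ f x) (ψ : (G ⧸ H) →₀ ℝ)
    (hψ : ∀ q, 0 ≤ ψ q) (q : G ⧸ H) :
    ‖quasiReg H (toC f) (toC ψ) q‖ = ∑ z ∈ f.support, f z * ψ (z⁻¹ • q) := by
  rw [quasiReg_toC_apply, Complex.norm_real, Real.norm_of_nonneg]
  exact Finset.sum_nonneg fun z _ => mul_nonneg (hf z) (hψ _)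

theorem l1Norm_nonneg {α k : Type*} [NormedAddCommGroup k] (f : α →₀ k) : 0 ≤ l1Norm f :=
  Finset.sum_nonneg fun x _ => norm_nonneg _

theorem conv_toC_norm_le (f : G →₀ ℝ) (hf : ∀ x, 0 ≤ f x) (ξ : G →₀ ℂ) (x : G) :
    ‖conv (toC f) ξ x‖ ≤ ∑ z ∈ f.support, f z * ‖ξ (z⁻¹ * x)‖ := by
  rw [conv_apply, toC_support]
  refine (norm_sum_le _ _).trans (le_of_eq ?_)
  apply Finset.sum_congr rfl
  intro z _
  rw [toC_apply, norm_mul, Complex.norm_real, Real.norm_of_nonneg (hf z)]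

end Helpers7
section Helpers8
open Finsupp
variable {G : Type*} [Group G] (H : Subgroup G)

theorem sum_fiber_if (T : Finset G) (g : G → ℝ) :
    ∑ x ∈ T, g x = ∑ q ∈ T.image (QuotientGroup.mk : G → G ⧸ H),
      ∑ x ∈ T, if (QuotientGroup.mk x : G ⧸ H) = q then g x else 0 := by
  rw [Finset.sum_comm]
  apply Finset.sum_congr rfl
  intro x hx
  rw [Finset.sum_ite_eq (T.image (QuotientGroup.mk : G → G ⧸ H))
    (QuotientGroup.mk x : G ⧸ H) (fun _ => g x),
    if_pos (Finset.mem_image_of_mem _ hx)]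

theorem part2a_key (f : G →₀ ℝ) (hf : ∀ x, 0 ≤ f x) (ξ : G →₀ ℂ) :
    ∃ η : (G ⧸ H) →₀ ℂ, l2Norm η = l2Norm ξ ∧
      l2Norm (conv (toC f) ξ) ≤ l2Norm (quasiReg H (toC f) η) := by
  classical
  have hsq0 : (fun c : ℂ => ‖c‖ ^ 2) 0 = 0 := by simp
  set sqξ : (G ⧸ H) →₀ ℝ :=
    Finsupp.mapDomain (QuotientGroup.mk : G → G ⧸ H)
      (ξ.mapRange (fun c => ‖c‖ ^ 2) hsq0) with hsqdef
  have hsqnn : ∀ q, 0 ≤ sqξ q :=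
    fun q => mdr_nonneg H _ hsq0 (fun c => by positivity) ξ q
  set ψ : (G ⧸ H) →₀ ℝ := sqξ.mapRange Real.sqrt Real.sqrt_zero with hψdef
  have hψnn : ∀ q, 0 ≤ ψ q := fun q => by
    rw [hψdef, Finsupp.mapRange_apply]; exact Real.sqrt_nonneg _
  have hψapp : ∀ q, ψ q = Real.sqrt (sqξ q) := fun q => by
    rw [hψdef, Finsupp.mapRange_apply]
  refine ⟨toC ψ, ?_, ?_⟩
  · -- l2Norm (toC ψ) = l2Norm ξ
    rw [l2Norm_toC]
    have h1 : l2Norm ψ = Real.sqrt (∑ q ∈ sqξ.support, ‖ψ q‖ ^ 2) :=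
      l2Norm_eq_sqrt_sum ψ sqξ.support (hψdef ▸ Finsupp.support_mapRange)
    have h2 : ∀ q, ‖ψ q‖ ^ 2 = sqξ q := fun q => by
      rw [hψapp, Real.norm_of_nonneg (Real.sqrt_nonneg _), Real.sq_sqrt (hsqnn q)]
    rw [h1, Finset.sum_congr rfl (fun q _ => h2 q)]
    have h3 : ∑ q ∈ sqξ.support, sqξ q = ∑ x ∈ ξ.support, ‖ξ x‖ ^ 2 := by
      have h4 : (∑ q ∈ sqξ.support, sqξ q) = sqξ.sum (fun _ c => c) := rfl
      rw [h4, hsqdef, Finsupp.sum_mapDomain_index (fun _ => rfl) (fun _ _ _ => rfl)]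
      rw [Finsupp.sum]
      apply Finset.sum_subset Finsupp.support_mapRange
      intro x _ hx
      have := Finsupp.notMem_support_iff.mp hx
      rw [Finsupp.mapRange_apply] at this
      simpa using this
    rw [h3, l2Norm]
  · -- the main inequality
    set T : Finset G := (conv (toC f) ξ).support with hT
    set s : Finset G := f.support with hs
    have hkey : ∀ q : G ⧸ H,
        (∑ x ∈ T, if (QuotientGroup.mk x : G ⧸ H) = q then ‖conv (toC f) ξ x‖ ^ 2 else 0)
          ≤ (∑ z ∈ s, f z * ψ (z⁻¹ • q)) ^ 2 := by
      intro q
      set v : G → G → ℝ := fun z x =>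
        if (QuotientGroup.mk x : G ⧸ H) = q then f z * ‖ξ (z⁻¹ * x)‖ else 0 with hv
      have hstep1 :
          (∑ x ∈ T, if (QuotientGroup.mk x : G ⧸ H) = q then ‖conv (toC f) ξ x‖ ^ 2 else 0)
            ≤ ∑ x ∈ T, ‖∑ z ∈ s, v z x‖ ^ 2 := by
        apply Finset.sum_le_sum
        intro x _
        by_cases hc : (QuotientGroup.mk x : G ⧸ H) = q
        · rw [if_pos hc]
          have hvx : ∑ z ∈ s, v z x = ∑ z ∈ s, f z * ‖ξ (z⁻¹ * x)‖ :=
            Finset.sum_congr rfl (fun z _ => by simp only [hv]; rw [if_pos hc])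
          have hb := conv_toC_norm_le f hf ξ x
          have hbn : 0 ≤ ∑ z ∈ s, f z * ‖ξ (z⁻¹ * x)‖ :=
            Finset.sum_nonneg fun z _ => mul_nonneg (hf z) (norm_nonneg _)
          calc ‖conv (toC f) ξ x‖ ^ 2 ≤ (∑ z ∈ s, f z * ‖ξ (z⁻¹ * x)‖) ^ 2 := by
                apply pow_le_pow_left₀ (norm_nonneg _) hb
            _ = ‖∑ z ∈ s, v z x‖ ^ 2 := by
                rw [hvx, Real.norm_of_nonneg hbn]
        · rw [if_neg hc]
          positivity
      have hstep2 := euclid_minkowski T s v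
      have hstep3 : ∀ z ∈ s, Real.sqrt (∑ x ∈ T, ‖v z x‖ ^ 2) ≤ f z * ψ (z⁻¹ • q) := by
        intro z _
        have h5 : ∀ x, ‖v z x‖ ^ 2 =
            (f z) ^ 2 * if (QuotientGroup.mk x : G ⧸ H) = q then ‖ξ (z⁻¹ * x)‖ ^ 2 else 0 := by
          intro x
          simp only [hv]
          by_cases hc : (QuotientGroup.mk x : G ⧸ H) = q
          · rw [if_pos hc, if_pos hc, Real.norm_of_nonneg (mul_nonneg (hf z) (norm_nonneg _))]
            ring
          · rw [if_neg hc, if_neg hc]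
            simp
        rw [Finset.sum_congr rfl (fun x _ => h5 x), ← Finset.mul_sum,
          Real.sqrt_mul (sq_nonneg _), Real.sqrt_sq (hf z)]
        apply mul_le_mul_of_nonneg_left _ (hf z)
        rw [hψapp, hsqdef]
        apply Real.sqrt_le_sqrt
        exact fiber_sum_le H (fun c => ‖c‖ ^ 2) hsq0 (fun c => by positivity) ξ T z q
      have hsqrtle : Real.sqrt
          (∑ x ∈ T, if (QuotientGroup.mk x : G ⧸ H) = q then ‖conv (toC f) ξ x‖ ^ 2 else 0)
            ≤ ∑ z ∈ s, f z * ψ (z⁻¹ • q) :=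
        (Real.sqrt_le_sqrt hstep1).trans (hstep2.trans (Finset.sum_le_sum hstep3))
      have hnn : 0 ≤ ∑ x ∈ T, if (QuotientGroup.mk x : G ⧸ H) = q
          then ‖conv (toC f) ξ x‖ ^ 2 else 0 := by
        apply Finset.sum_nonneg
        intro x _
        split <;> positivity
      calc (∑ x ∈ T, if (QuotientGroup.mk x : G ⧸ H) = q then ‖conv (toC f) ξ x‖ ^ 2 else 0)
          = Real.sqrt (∑ x ∈ T, if (QuotientGroup.mk x : G ⧸ H) = q
              then ‖conv (toC f) ξ x‖ ^ 2 else 0) ^ 2 := (Real.sq_sqrt hnn).symm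
        _ ≤ (∑ z ∈ s, f z * ψ (z⁻¹ • q)) ^ 2 := by
            apply pow_le_pow_left₀ (Real.sqrt_nonneg _) hsqrtle
    -- assemble
    have hfib := sum_fiber_if H T (fun x => ‖conv (toC f) ξ x‖ ^ 2)
    have hQbound : ∀ q ∈ T.image (QuotientGroup.mk : G → G ⧸ H),
        (∑ x ∈ T, if (QuotientGroup.mk x : G ⧸ H) = q
        then ‖conv (toC f) ξ x‖ ^ 2 else 0) ≤ ‖quasiReg H (toC f) (toC ψ) q‖ ^ 2 := by
      intro q _
      rw [quasiReg_toC_norm H f hf ψ hψnn q]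
      exact hkey q
    calc l2Norm (conv (toC f) ξ)
        = Real.sqrt (∑ x ∈ T, ‖conv (toC f) ξ x‖ ^ 2) := l2Norm_eq_sqrt_sum _ T subset_rfl
      _ = Real.sqrt (∑ q ∈ T.image (QuotientGroup.mk : G → G ⧸ H), ∑ x ∈ T,
            if (QuotientGroup.mk x : G ⧸ H) = q
            then ‖conv (toC f) ξ x‖ ^ 2 else 0) := by rw [← hfib]
      _ ≤ Real.sqrt (∑ q ∈ T.image (QuotientGroup.mk : G → G ⧸ H),
            ‖quasiReg H (toC f) (toC ψ) q‖ ^ 2) :=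
          Real.sqrt_le_sqrt (Finset.sum_le_sum hQbound)
      _ ≤ Real.sqrt (∑ q ∈ T.image (QuotientGroup.mk : G → G ⧸ H) ∪
            (quasiReg H (toC f) (toC ψ)).support, ‖quasiReg H (toC f) (toC ψ) q‖ ^ 2) := by
          apply Real.sqrt_le_sqrt
          apply Finset.sum_le_sum_of_subset_of_nonneg Finset.subset_union_left
          intro q _ _
          positivity
      _ = l2Norm (quasiReg H (toC f) (toC ψ)) :=
          (l2Norm_eq_sqrt_sum _ _ Finset.subset_union_right).symm

end Helpers8

section Main
open Finsupp
variable {G : Type*} [Group G] (H : Subgroup G)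

theorem quasi_bdd (f : G →₀ ℂ) :
    BddAbove {c : ℝ | ∃ ξ : (G ⧸ H) →₀ ℂ, l2Norm ξ ≤ 1 ∧ c = l2Norm (quasiReg H f ξ)} := by
  refine ⟨l1Norm f, ?_⟩
  rintro c ⟨ξ, hξ, rfl⟩
  calc l2Norm (quasiReg H f ξ) ≤ l1Norm f * l2Norm ξ := young_quasi H f ξ
    _ ≤ l1Norm f * 1 := mul_le_mul_of_nonneg_left hξ (l1Norm_nonneg f)
    _ = l1Norm f := mul_one _

theorem quasi_mem_zero (f : G →₀ ℂ) :
    (0 : ℝ) ∈ {c : ℝ | ∃ ξ : (G ⧸ H) →₀ ℂ, l2Norm ξ ≤ 1 ∧ c = l2Norm (quasiReg H f ξ)} :=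
  ⟨0, by rw [l2Norm_zero]; exact zero_le_one, by rw [quasiReg_zero, l2Norm_zero]⟩

theorem quasi_nonneg (f : G →₀ ℂ) : 0 ≤ quasiRegOpNorm H f :=
  le_csSup (quasi_bdd H f) (quasi_mem_zero H f)

theorem quasi_le (f : G →₀ ℂ) (ξ : (G ⧸ H) →₀ ℂ) (hξ : l2Norm ξ ≤ 1) :
    l2Norm (quasiReg H f ξ) ≤ quasiRegOpNorm H f :=
  le_csSup (quasi_bdd H f) ⟨ξ, hξ, rfl⟩

theorem hyb_bdd (f : G →₀ ℂ) :
    BddAbove {c : ℝ | ∃ ϕ : G →₀ ℂ, l21Norm H ϕ ≤ 1 ∧ c = l21Norm H (conv f ϕ)} := by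
  refine ⟨l1Norm f, ?_⟩
  rintro c ⟨ϕ, hϕ, rfl⟩
  calc l21Norm H (conv f ϕ) ≤ l1Norm f * l21Norm H ϕ := young_l21 H f ϕ
    _ ≤ l1Norm f * 1 := mul_le_mul_of_nonneg_left hϕ (l1Norm_nonneg f)
    _ = l1Norm f := mul_one _

theorem hyb_mem_zero (f : G →₀ ℂ) :
    (0 : ℝ) ∈ {c : ℝ | ∃ ϕ : G →₀ ℂ, l21Norm H ϕ ≤ 1 ∧ c = l21Norm H (conv f ϕ)} :=
  ⟨0, by rw [l21Norm_zero]; exact zero_le_one, by rw [conv_zero, l21Norm_zero]⟩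

theorem hyb_nonneg (f : G →₀ ℂ) : 0 ≤ hybridOpNorm H f :=
  le_csSup (hyb_bdd H f) (hyb_mem_zero H f)

theorem hyb_le (f ϕ : G →₀ ℂ) (hϕ : l21Norm H ϕ ≤ 1) :
    l21Norm H (conv f ϕ) ≤ hybridOpNorm H f :=
  le_csSup (hyb_bdd H f) ⟨ϕ, hϕ, rfl⟩

theorem part1 (f : G →₀ ℂ) : quasiRegOpNorm H f ≤ hybridOpNorm H f := by
  apply Real.sSup_le _ (hyb_nonneg H f)
  rintro c ⟨ξ, hξ, rfl⟩
  set ϕ : G →₀ ℂ := Finsupp.mapDomain (Quotient.out : G ⧸ H → G) ξ with hϕ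
  have h1 : l21Norm H ϕ ≤ 1 := by rw [hϕ, l21Norm_lift]; exact hξ
  calc l2Norm (quasiReg H f ξ)
      = l2Norm (quasiReg H f (Finsupp.mapDomain (QuotientGroup.mk : G → G ⧸ H) ϕ)) := by
        rw [hϕ, mapDomain_mk_lift]
    _ = l2Norm (Finsupp.mapDomain (QuotientGroup.mk : G → G ⧸ H) (conv f ϕ)) := by
        rw [mapDomain_mk_conv]
    _ ≤ l21Norm H (conv f ϕ) := l2Norm_mapDomain_mk_le H _
    _ ≤ hybridOpNorm H f := hyb_le H f ϕ h1

theorem part2b (f : G →₀ ℝ) (hf : ∀ x, 0 ≤ f x) :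
    hybridOpNorm H (toC f) ≤ quasiRegOpNorm H (toC f) := by
  apply Real.sSup_le _ (quasi_nonneg H (toC f))
  rintro c ⟨ϕ, hϕ, rfl⟩
  have hpoint : ∀ q, Psi H (conv (toC f) ϕ) q ≤
      ‖quasiReg H (toC f) (toC (Psi H ϕ)) q‖ := by
    intro q
    rw [quasiReg_toC_norm H f hf (Psi H ϕ) (psi_nonneg' H ϕ) q]
    refine (conv_psi_pointwise H (toC f) ϕ q).trans (le_of_eq ?_)
    rw [toC_support]
    apply Finset.sum_congr rfl
    intro z _
    rw [toC_apply, Complex.norm_real, Real.norm_of_nonneg (hf z)]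
  have hstep : l21Norm H (conv (toC f) ϕ) ≤
      l2Norm (quasiReg H (toC f) (toC (Psi H ϕ))) := by
    rw [l21Norm_eq]
    apply l2Norm_mono
    intro q
    rw [Real.norm_of_nonneg (psi_nonneg' H _ q)]
    exact hpoint q
  refine hstep.trans (quasi_le H (toC f) (toC (Psi H ϕ)) ?_)
  rw [l2Norm_toC, ← l21Norm_eq]
  exact hϕ

theorem part2a (f : G →₀ ℝ) (hf : ∀ x, 0 ≤ f x) :
    regOpNorm (toC f) ≤ quasiRegOpNorm H (toC f) := by
  apply Real.sSup_le _ (quasi_nonneg H (toC f))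
  rintro c ⟨ξ, hξ, rfl⟩
  obtain ⟨η, hη1, hη2⟩ := part2a_key H f hf ξ
  exact hη2.trans (quasi_le H (toC f) η (by rw [hη1]; exact hξ))

end Main

/-- comparison of the quasi-regular, hybrid and regular operator
norms. -/
theorem statement2 {G : Type*} [Group G] (S : Set G) (hfin : S.Finite)
    (hsym : ∀ s ∈ S, s⁻¹ ∈ S) (hgen : Subgroup.closure S = ⊤) (H : Subgroup G) :
    (∀ f : G →₀ ℂ, quasiRegOpNorm H f ≤ hybridOpNorm H f) ∧
    (∀ f : G →₀ ℝ, (∀ x, 0 ≤ f x) →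
      regOpNorm (toC f) ≤ quasiRegOpNorm H (toC f) ∧
      quasiRegOpNorm H (toC f) = hybridOpNorm H (toC f)) := by
  refine ⟨fun f => part1 H f, fun f hf => ⟨part2a H f hf, ?_⟩⟩
  exact le_antisymm (part1 H (toC f)) (part2b H f hf)
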